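/- (A single step of Oblique Matching Pursuit.) Let Ψ, Ψ̃ ∈ K^{m×n}, let x* ∈ K^n be s-sparse with support J*, let z ∈ K^m, y = Ψx* + z, and let J ⊊ J* be a proper subset. Assume θ_{s+1}(Ψ̃*Ψ) < 1 and that ‖Π_{J*\J}x*‖_∞ − 2·θ_{s+1}(Ψ̃*Ψ)·‖Π_{J*\J}x*‖₂ > (‖Ψ_{J*}‖·‖Ψ̃_{J*}‖ / (1 − θ_{s+1}(Ψ̃*Ψ)))·2·(max_{1≤j≤n}‖ψ̃_j‖₂)·‖z‖₂. Set E = I_m − Ψ_J(Ψ̃_J*Ψ_J)^{-1}Ψ̃_J* (with E = I_m when J = ∅). Then max_{j∈J*\J} |⟨ψ̃_j, Ey⟩| > |⟨ψ̃_k, Ey⟩| for every k ∈ {1,…,n}\J*; i.e., the next step of oblique matching pursuit selects an element of J*\J. -/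

import Mathlib

set_option maxHeartbeats 2000000
set_option linter.unusedSectionVars false


open scoped BigOperators
open Matrix MeasureTheory

noncomputable section

namespace ObliquePursuit

variable {𝕜 : Type*} [RCLike 𝕜]

/-- The Euclidean (`ℓ²`) norm of a finitely indexed vector. -/
def l2 {ι : Type*} [Fintype ι] (x : ι → 𝕜) : ℝ :=
  Real.sqrt (∑ i, ‖x i‖ ^ 2)

/-- The spectral (`ℓ² → ℓ²` operator) norm of a matrix. -/
def specNorm {ι κ : Type*} [Fintype ι] [Fintype κ] [DecidableEq κ]
    (M : Matrix ι κ 𝕜) : ℝ :=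
  ‖LinearMap.toContinuousLinearMap (Matrix.toEuclideanLin M)‖

/-- `x` is `s`-sparse: it has at most `s` nonzero entries. -/
def Sparse {ι : Type*} (s : ℕ) (x : ι → 𝕜) : Prop :=
  ∃ J : Finset ι, J.card ≤ s ∧ ∀ i, x i ≠ 0 → i ∈ J

/-- The `s`-restricted biorthogonality constant `θ_s(M)`: the smallest `δ ≥ 0` such that
`|⟨y, Mx⟩ − ⟨y, x⟩| ≤ δ‖x‖₂‖y‖₂` for all `x, y` supported on a common index set of
cardinality at most `s`. -/
def theta {ι : Type*} [Fintype ι] (s : ℕ) (M : Matrix ι ι 𝕜) : ℝ :=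
  sInf {δ : ℝ | 0 ≤ δ ∧ ∀ J : Finset ι, J.card ≤ s →
    ∀ x y : ι → 𝕜, (∀ i, x i ≠ 0 → i ∈ J) → (∀ i, y i ≠ 0 → i ∈ J) →
      ‖star y ⬝ᵥ M.mulVec x - star y ⬝ᵥ x‖ ≤ δ * l2 x * l2 y}

/-- The `s`-restricted isometry constant `δ_s(Ψ)`. -/
def ric {ι κ : Type*} [Fintype ι] [Fintype κ] (s : ℕ) (Ψ : Matrix ι κ 𝕜) : ℝ :=
  sInf {δ : ℝ | 0 ≤ δ ∧ ∀ x : κ → 𝕜, Sparse s x →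
    (1 - δ) * l2 x ^ 2 ≤ l2 (Ψ.mulVec x) ^ 2 ∧
      l2 (Ψ.mulVec x) ^ 2 ≤ (1 + δ) * l2 x ^ 2}

/-- Coordinate projection `Π_J`: keep the entries indexed by `J`, zero out the others. -/
def proj {ι : Type*} [DecidableEq ι] (J : Finset ι) (x : ι → 𝕜) : ι → 𝕜 :=
  fun i => if i ∈ J then x i else 0

/-- The column submatrix `Ψ_J` of `Ψ` formed by the columns indexed by `J`. -/
def cols {ι κ : Type*} (Ψ : Matrix ι κ 𝕜) (J : Finset κ) :
    Matrix ι {j // j ∈ J} 𝕜 :=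
  Ψ.submatrix id fun j => (j : κ)

/-- The `j`-th column of `Ψ`. -/
def col {ι κ : Type*} (Ψ : Matrix ι κ 𝕜) (j : κ) : ι → 𝕜 :=
  fun i => Ψ i j

/-- The complementary oblique projector `E = I − Ψ_J (Ψ̃_J^* Ψ_J)⁻¹ Ψ̃_J^*`
(equal to `I` when `J = ∅`). -/
def obliqueE {ι κ : Type*} [Fintype ι] [DecidableEq ι] [DecidableEq κ]
    (Ψ Ψt : Matrix ι κ 𝕜) (J : Finset κ) : Matrix ι ι 𝕜 :=
  1 - cols Ψ J * ((cols Ψt J)ᴴ * cols Ψ J)⁻¹ * (cols Ψt J)ᴴ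

/-- The smallest (real) eigenvalue of a matrix. -/
def lamMin {ι : Type*} [Fintype ι] (G : Matrix ι ι 𝕜) : ℝ :=
  sInf {r : ℝ | ∃ v : ι → 𝕜, v ≠ 0 ∧ G.mulVec v = (r : 𝕜) • v}

/-- The `j`-th largest singular value (1-indexed) of a matrix, characterized via the
Eckart–Young–Mirsky theorem: `σ_j(A) = min { ‖A − B‖ : rank B < j }` where `‖·‖` is the
spectral norm. -/
def singVal {ι κ : Type*} [Fintype ι] [Fintype κ] [DecidableEq κ]
    (A : Matrix ι κ 𝕜) (j : ℕ) : ℝ :=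
  sInf {r : ℝ | ∃ B : Matrix ι κ 𝕜, B.rank < j ∧ r = specNorm (A - B)}

/-! ### Auxiliary lemmas -/

section Aux

variable {ι κ : Type*} [Fintype ι] [Fintype κ]

lemma l2_nonneg (x : ι → 𝕜) : 0 ≤ l2 x := Real.sqrt_nonneg _

lemma l2_sq (x : ι → 𝕜) : l2 x ^ 2 = ∑ i, ‖x i‖ ^ 2 := by
  rw [l2, Real.sq_sqrt]; positivity

lemma l2_eq_norm (x : ι → 𝕜) : l2 x = ‖(WithLp.equiv 2 (ι → 𝕜)).symm x‖ := by
  rw [EuclideanSpace.norm_eq]; rfl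

lemma l2_eq_zero {x : ι → 𝕜} (h : l2 x = 0) : x = 0 := by
  rw [l2_eq_norm, norm_eq_zero] at h
  have := congrArg (WithLp.equiv 2 (ι → 𝕜)) h
  simpa using this

lemma l2_neg (v : ι → 𝕜) : l2 (-v) = l2 v := by simp [l2]

lemma l2_sub_l2_le (x y : ι → 𝕜) : l2 x - l2 y ≤ l2 (x - y) := by
  rw [l2_eq_norm x, l2_eq_norm y, l2_eq_norm (x - y)]
  have h : (WithLp.equiv 2 (ι → 𝕜)).symm (x - y)
      = (WithLp.equiv 2 (ι → 𝕜)).symm x - (WithLp.equiv 2 (ι → 𝕜)).symm y := rfl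
  rw [h]
  exact norm_sub_norm_le _ _

lemma entry_le_l2 (x : ι → 𝕜) (i : ι) : ‖x i‖ ≤ l2 x := by
  rw [l2]
  rw [show ‖x i‖ = Real.sqrt (‖x i‖^2) by rw [Real.sqrt_sq (norm_nonneg _)]]
  apply Real.sqrt_le_sqrt
  exact Finset.single_le_sum (f := fun i => ‖x i‖^2) (fun j _ => by positivity) (Finset.mem_univ i)

lemma abs_dot_le (x y : ι → 𝕜) : ‖star x ⬝ᵥ y‖ ≤ l2 x * l2 y := by
  have := norm_inner_le_norm (𝕜 := 𝕜) ((WithLp.equiv 2 (ι → 𝕜)).symm x)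
    ((WithLp.equiv 2 (ι → 𝕜)).symm y)
  rw [WithLp.equiv_symm_apply, EuclideanSpace.inner_toLp_toLp, dotProduct_comm] at this
  rw [l2_eq_norm, l2_eq_norm]; exact this

lemma star_dot_self (x : ι → 𝕜) : ‖star x ⬝ᵥ x‖ = l2 x ^ 2 := by
  have : star x ⬝ᵥ x = ((l2 x ^2 : ℝ) : 𝕜) := by
    rw [l2_sq, dotProduct]
    push_cast
    refine Finset.sum_congr rfl fun i _ => ?_
    simp [Pi.star_apply, RCLike.star_def, RCLike.conj_mul, RCLike.normSq_eq_def']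
  rw [this]
  rw [RCLike.norm_ofReal, abs_of_nonneg (by positivity)]

lemma l2_le_of_sq_le {y : ι → 𝕜} {c : ℝ} (hc : 0 ≤ c) (h : l2 y ^ 2 ≤ c * l2 y) :
    l2 y ≤ c := by
  have h0 : (0:ℝ) ≤ l2 y := Real.sqrt_nonneg _
  rcases eq_or_lt_of_le h0 with h0 | h0
  · linarith
  · nlinarith

lemma mulVec_l2_le [DecidableEq κ] (A : Matrix ι κ 𝕜) (x : κ → 𝕜) :
    l2 (A.mulVec x) ≤ specNorm A * l2 x := by
  have := (LinearMap.toContinuousLinearMap (Matrix.toEuclideanLin A)).le_opNorm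
    ((WithLp.equiv 2 (κ → 𝕜)).symm x)
  simp only [LinearMap.coe_toContinuousLinearMap'] at this
  rw [WithLp.equiv_symm_apply, Matrix.toEuclideanLin_apply_piLp_toLp] at this
  rw [l2_eq_norm, l2_eq_norm]
  exact this

lemma conjT_mulVec_l2_le [DecidableEq ι] [DecidableEq κ] (A : Matrix ι κ 𝕜) (v : ι → 𝕜) :
    l2 (Aᴴ.mulVec v) ≤ specNorm A * l2 v := by
  have key : star (Aᴴ *ᵥ v) ⬝ᵥ (Aᴴ *ᵥ v) = star v ⬝ᵥ (A *ᵥ (Aᴴ *ᵥ v)) := by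
    rw [Matrix.dotProduct_mulVec (star v) A, Matrix.star_mulVec,
      Matrix.conjTranspose_conjTranspose]
  have h1 : l2 (Aᴴ *ᵥ v) ^ 2 = ‖star v ⬝ᵥ (A *ᵥ (Aᴴ *ᵥ v))‖ := by
    rw [← star_dot_self, key]
  have h2 : ‖star v ⬝ᵥ (A *ᵥ (Aᴴ *ᵥ v))‖ ≤ l2 v * (specNorm A * l2 (Aᴴ *ᵥ v)) :=
    (abs_dot_le v _).trans (mul_le_mul_of_nonneg_left (mulVec_l2_le A _) (l2_nonneg _))
  refine l2_le_of_sq_le (mul_nonneg (norm_nonneg _) (l2_nonneg _)) ?_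
  calc l2 (Aᴴ *ᵥ v) ^ 2 = ‖star v ⬝ᵥ (A *ᵥ (Aᴴ *ᵥ v))‖ := h1
    _ ≤ l2 v * (specNorm A * l2 (Aᴴ *ᵥ v)) := h2
    _ = specNorm A * l2 v * l2 (Aᴴ *ᵥ v) := by ring

lemma theta_mem (s : ℕ) (M : Matrix ι ι 𝕜) :
    0 ≤ theta s M ∧ ∀ J : Finset ι, J.card ≤ s →
    ∀ x y : ι → 𝕜, (∀ i, x i ≠ 0 → i ∈ J) → (∀ i, y i ≠ 0 → i ∈ J) →
      ‖star y ⬝ᵥ M.mulVec x - star y ⬝ᵥ x‖ ≤ theta s M * l2 x * l2 y := by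
  have hset : {δ : ℝ | 0 ≤ δ ∧ ∀ J : Finset ι, J.card ≤ s →
      ∀ x y : ι → 𝕜, (∀ i, x i ≠ 0 → i ∈ J) → (∀ i, y i ≠ 0 → i ∈ J) →
      ‖star y ⬝ᵥ M.mulVec x - star y ⬝ᵥ x‖ ≤ δ * l2 x * l2 y} =
      Set.Ici 0 ∩ ⋂ (J : Finset ι) (_ : J.card ≤ s) (x : ι → 𝕜) (y : ι → 𝕜)
        (_ : ∀ i, x i ≠ 0 → i ∈ J) (_ : ∀ i, y i ≠ 0 → i ∈ J),
        {δ : ℝ | ‖star y ⬝ᵥ M.mulVec x - star y ⬝ᵥ x‖ ≤ δ * l2 x * l2 y} := by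
    ext δ
    simp only [Set.mem_setOf_eq, Set.mem_inter_iff, Set.mem_Ici, Set.mem_iInter]
  have hclosed : IsClosed {δ : ℝ | 0 ≤ δ ∧ ∀ J : Finset ι, J.card ≤ s →
      ∀ x y : ι → 𝕜, (∀ i, x i ≠ 0 → i ∈ J) → (∀ i, y i ≠ 0 → i ∈ J) →
      ‖star y ⬝ᵥ M.mulVec x - star y ⬝ᵥ x‖ ≤ δ * l2 x * l2 y} := by
    rw [hset]
    refine isClosed_Ici.inter ?_
    refine isClosed_iInter fun J => isClosed_iInter fun _ => isClosed_iInter fun x =>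
      isClosed_iInter fun y => isClosed_iInter fun _ => isClosed_iInter fun _ => ?_
    exact isClosed_le continuous_const ((continuous_id.mul continuous_const).mul continuous_const)
  have hne : ∃ δ : ℝ, δ ∈ {δ : ℝ | 0 ≤ δ ∧ ∀ J : Finset ι, J.card ≤ s →
      ∀ x y : ι → 𝕜, (∀ i, x i ≠ 0 → i ∈ J) → (∀ i, y i ≠ 0 → i ∈ J) →
      ‖star y ⬝ᵥ M.mulVec x - star y ⬝ᵥ x‖ ≤ δ * l2 x * l2 y} := by
    refine ⟨(∑ i, ∑ j, ‖M i j‖) + 1, by positivity, fun J hJ x y hx hy => ?_⟩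
    have h1 : ‖star y ⬝ᵥ M.mulVec x‖ ≤ (∑ i, ∑ j, ‖M i j‖) * l2 x * l2 y := by
      calc ‖star y ⬝ᵥ M.mulVec x‖ ≤ ∑ i, ‖star (y i) * (M.mulVec x) i‖ := by
            exact norm_sum_le _ _
        _ ≤ ∑ i, ∑ j, ‖y i‖ * ‖M i j‖ * ‖x j‖ := by
            refine Finset.sum_le_sum fun i _ => ?_
            rw [norm_mul, norm_star]
            calc ‖y i‖ * ‖(M.mulVec x) i‖ ≤ ‖y i‖ * ∑ j, ‖M i j * x j‖ :=
                  mul_le_mul_of_nonneg_left (norm_sum_le _ _) (norm_nonneg _)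
              _ = ∑ j, ‖y i‖ * ‖M i j‖ * ‖x j‖ := by
                  rw [Finset.mul_sum]
                  exact Finset.sum_congr rfl fun j _ => by rw [norm_mul]; ring
        _ ≤ ∑ i, ∑ j, ‖M i j‖ * (l2 x * l2 y) := by
            refine Finset.sum_le_sum fun i _ => Finset.sum_le_sum fun j _ => ?_
            calc ‖y i‖ * ‖M i j‖ * ‖x j‖ ≤ l2 y * ‖M i j‖ * l2 x :=
                  mul_le_mul (mul_le_mul (entry_le_l2 y i) le_rfl (norm_nonneg _) (l2_nonneg _))
                    (entry_le_l2 x j) (norm_nonneg _) (mul_nonneg (l2_nonneg _) (norm_nonneg _))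
              _ = ‖M i j‖ * (l2 x * l2 y) := by ring
        _ = (∑ i, ∑ j, ‖M i j‖) * l2 x * l2 y := by
            rw [Finset.sum_mul, Finset.sum_mul]
            refine Finset.sum_congr rfl fun i _ => ?_
            rw [Finset.sum_mul, Finset.sum_mul]
            exact Finset.sum_congr rfl fun j _ => by ring
    have h2 : ‖star y ⬝ᵥ x‖ ≤ l2 x * l2 y :=
      (abs_dot_le y x).trans (le_of_eq (mul_comm _ _))
    calc ‖star y ⬝ᵥ M.mulVec x - star y ⬝ᵥ x‖
        ≤ ‖star y ⬝ᵥ M.mulVec x‖ + ‖star y ⬝ᵥ x‖ := norm_sub_le _ _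
      _ ≤ (∑ i, ∑ j, ‖M i j‖) * l2 x * l2 y + l2 x * l2 y := add_le_add h1 h2
      _ = ((∑ i, ∑ j, ‖M i j‖) + 1) * l2 x * l2 y := by ring
  exact hclosed.csInf_mem hne ⟨0, fun δ hδ => hδ.1⟩

lemma proj_err_le [DecidableEq ι] (s : ℕ) (M : Matrix ι ι 𝕜) (S T : Finset ι)
    (hTS : T ⊆ S) (hS : S.card ≤ s) (x : ι → 𝕜) (hx : ∀ i, x i ≠ 0 → i ∈ S) :
    l2 (proj T (M.mulVec x - x)) ≤ theta s M * l2 x := by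
  set y := proj T (M.mulVec x - x) with hy_def
  have hy : ∀ i, y i ≠ 0 → i ∈ S := by
    intro i hi
    by_contra hiS
    have : i ∉ T := fun h => hiS (hTS h)
    simp [hy_def, proj, this] at hi
  have key : star y ⬝ᵥ M.mulVec x - star y ⬝ᵥ x = star y ⬝ᵥ y := by
    have h : star y ⬝ᵥ M.mulVec x - star y ⬝ᵥ x = star y ⬝ᵥ (M.mulVec x - x) := by
      rw [dotProduct_sub]
    rw [h]
    refine Finset.sum_congr rfl fun i _ => ?_
    by_cases hiT : i ∈ T
    · simp [hy_def, proj, hiT]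
    · simp [hy_def, proj, hiT]
  have hb := (theta_mem s M).2 S hS x y hx hy
  rw [key, star_dot_self] at hb
  exact l2_le_of_sq_le (mul_nonneg (theta_mem s M).1 (l2_nonneg _)) hb

lemma oblique_l2_le [DecidableEq ι] (P : Matrix ι ι 𝕜) (hP : P * P = P) {C : ℝ} (hC1 : 1 ≤ C)
    (hC : ∀ v, l2 (P.mulVec v) ≤ C * l2 v) (z : ι → 𝕜) :
    l2 (z - P.mulVec z) ≤ C * l2 z := by
  classical
  set p := P.mulVec z with hp_def
  set q := z - p with hq_def
  have hPq : P.mulVec q = 0 := by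
    rw [hq_def, Matrix.mulVec_sub, hp_def, Matrix.mulVec_mulVec, hP, sub_self]
  by_cases hq : q = 0
  · rw [hq]
    have h0 : l2 (0 : ι → 𝕜) = 0 := by simp [l2]
    rw [h0]
    exact mul_nonneg (le_trans zero_le_one hC1) (l2_nonneg z)
  by_cases hp : p = 0
  · have hqz : q = z := by rw [hq_def, hp, sub_zero]
    rw [hqz]
    exact le_mul_of_one_le_left (l2_nonneg z) hC1
  set E := EuclideanSpace 𝕜 ι
  set ee := (WithLp.equiv 2 (ι → 𝕜)).symm with hee
  set pe : E := ee p
  set qe : E := ee q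
  set ze : E := ee z
  have hze : ze = pe + qe := by
    simp only [pe, qe, ze, hee]
    rw [WithLp.equiv_symm_apply, ← WithLp.toLp_add]
    congr 1
    rw [hq_def]; ring
  have hqe0 : qe ≠ 0 := by
    intro h
    apply hq
    have := congrArg (WithLp.equiv 2 (ι → 𝕜)) h
    simpa [qe, hee] using this
  have hqnorm : (0:ℝ) < ‖qe‖ := norm_pos_iff.mpr hqe0
  set c : 𝕜 := inner 𝕜 qe pe with hc_def
  set t₀ : 𝕜 := -(c / ((‖qe‖^2 : ℝ) : 𝕜)) with ht0
  set v := p + t₀ • q with hv_def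
  have hPv : P.mulVec v = p := by
    rw [hv_def, Matrix.mulVec_add, Matrix.mulVec_smul, hPq, smul_zero, add_zero,
      hp_def, Matrix.mulVec_mulVec, hP]
  have hve : ee v = pe + t₀ • qe := by
    simp only [hv_def, hee, pe, qe]
    rw [WithLp.equiv_symm_apply, ← WithLp.toLp_smul, ← WithLp.toLp_add]
  have hvnorm : ‖ee v‖^2 = ‖pe‖^2 - ‖c‖^2 / ‖qe‖^2 := by
    rw [hve, @norm_add_sq 𝕜]
    rw [inner_smul_right, norm_smul]
    have h1 : (inner 𝕜 pe qe : 𝕜) = starRingEnd 𝕜 c := by rw [hc_def, inner_conj_symm]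
    rw [h1]
    have h2 : RCLike.re (t₀ * starRingEnd 𝕜 c) = -(‖c‖^2 / ‖qe‖^2) := by
      have hx : t₀ * starRingEnd 𝕜 c = ((-(‖c‖^2/‖qe‖^2) : ℝ) : 𝕜) := by
        rw [ht0, neg_mul, div_mul_eq_mul_div, RCLike.mul_conj]
        push_cast
        ring
      rw [hx, RCLike.ofReal_re]
    rw [h2]
    have h3 : ‖t₀‖ = ‖c‖ / ‖qe‖^2 := by
      rw [ht0, norm_neg, norm_div, RCLike.norm_ofReal, abs_of_nonneg (by positivity)]
    rw [h3]
    field_simp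
    ring
  have hz2 : ‖ze‖^2 = ‖pe‖^2 + 2*RCLike.re (inner 𝕜 pe qe : 𝕜) + ‖qe‖^2 := by
    rw [hze, @norm_add_sq 𝕜]
  have hre : RCLike.re (inner 𝕜 pe qe : 𝕜) = RCLike.re c := by
    rw [show (inner 𝕜 pe qe : 𝕜) = starRingEnd 𝕜 c by rw [hc_def, inner_conj_symm]]
    exact RCLike.conj_re c
  have hcsq : ‖c‖^2 = RCLike.re c^2 + RCLike.im c^2 := by
    have h1 := RCLike.normSq_eq_def' c
    have h2 := RCLike.normSq_apply c
    rw [h2] at h1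
    nlinarith [h1]
  have hkey2 : (l2 v * l2 q)^2 ≤ (l2 p * l2 z)^2 := by
    have e1 : (l2 v * l2 q)^2 = ‖ee v‖^2 * ‖qe‖^2 := by
      rw [l2_eq_norm v, l2_eq_norm q]
      ring
    have e2 : (l2 p * l2 z)^2 = ‖pe‖^2 * ‖ze‖^2 := by
      rw [l2_eq_norm p, l2_eq_norm z]
      ring
    rw [e1, e2, hvnorm, hz2, hre]
    have hq2 : (0:ℝ) < ‖qe‖^2 := by positivity
    rw [sub_mul, div_mul_cancel₀ _ (ne_of_gt hq2)]
    nlinarith [sq_nonneg (‖pe‖^2 + RCLike.re c), sq_nonneg (RCLike.im c), sq_nonneg ‖pe‖]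
  have hkey : l2 v * l2 q ≤ l2 p * l2 z :=
    le_of_pow_le_pow_left₀ (by norm_num) (mul_nonneg (l2_nonneg _) (l2_nonneg _)) hkey2
  have hpC : l2 p ≤ C * l2 v := by
    have := hC v
    rw [hPv] at this
    exact this
  have hppos : (0:ℝ) < l2 p := by
    rcases lt_or_eq_of_le (l2_nonneg p) with h | h
    · exact h
    · exact absurd (l2_eq_zero h.symm) hp
  have hC0 : (0:ℝ) ≤ C := le_trans zero_le_one hC1
  have final : l2 p * l2 q ≤ l2 p * (C * l2 z) := by
    calc l2 p * l2 q ≤ (C * l2 v) * l2 q := mul_le_mul_of_nonneg_right hpC (l2_nonneg _)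
      _ = C * (l2 v * l2 q) := by ring
      _ ≤ C * (l2 p * l2 z) := mul_le_mul_of_nonneg_left hkey hC0
      _ = l2 p * (C * l2 z) := by ring
  exact (mul_le_mul_iff_right₀ hppos).mp final

def extend [DecidableEq ι] (J : Finset ι) (c : {j // j ∈ J} → 𝕜) : ι → 𝕜 :=
  fun i => if h : i ∈ J then c ⟨i, h⟩ else 0

lemma extend_mem [DecidableEq ι] {J : Finset ι} (c : {j // j ∈ J} → 𝕜) {i : ι} (h : i ∈ J) :
    extend J c i = c ⟨i, h⟩ := dif_pos h

lemma extend_not_mem [DecidableEq ι] {J : Finset ι} (c : {j // j ∈ J} → 𝕜) {i : ι} (h : i ∉ J) :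
    extend J c i = 0 := dif_neg h

lemma l2_sq_eq_sum_subtype [DecidableEq ι] {J : Finset ι} (x : ι → 𝕜)
    (hx : ∀ i, x i ≠ 0 → i ∈ J) :
    l2 x ^ 2 = ∑ j : {j // j ∈ J}, ‖x ↑j‖ ^ 2 := by
  rw [l2_sq]
  calc ∑ i : ι, ‖x i‖ ^ 2 = ∑ i ∈ J, ‖x i‖ ^ 2 := by
        symm
        apply Finset.sum_subset (Finset.subset_univ J)
        intro i _ hiJ
        have : x i = 0 := by by_contra h; exact hiJ (hx i h)
        simp [this]
    _ = ∑ j : {j // j ∈ J}, ‖x ↑j‖ ^ 2 := (Finset.sum_coe_sort J _).symm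

lemma l2_extend [DecidableEq ι] {J : Finset ι} (c : {j // j ∈ J} → 𝕜) :
    l2 (extend J c) = l2 c := by
  have h := l2_sq_eq_sum_subtype (J := J) (extend J c)
    (fun i hi => by by_contra h; exact hi (extend_not_mem c h))
  have h2 : ∑ j : {j // j ∈ J}, ‖extend J c ↑j‖ ^ 2 = ∑ j : {j // j ∈ J}, ‖c j‖ ^ 2 := by
    refine Finset.sum_congr rfl fun j _ => ?_
    rw [extend_mem c j.2]
  have hsq : l2 (extend J c) ^ 2 = l2 c ^ 2 := by rw [h, h2, l2_sq]
  have := congrArg Real.sqrt hsq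
  rwa [Real.sqrt_sq (l2_nonneg _), Real.sqrt_sq (l2_nonneg _)] at this

lemma mulVec_extend [DecidableEq ι] (A : Matrix κ ι 𝕜) (J : Finset ι) (c : {j // j ∈ J} → 𝕜) :
    A.mulVec (extend J c) = (cols A J).mulVec c := by
  funext i
  show ∑ j, A i j * extend J c j = ∑ j : {j // j ∈ J}, A i ↑j * c j
  calc ∑ j : ι, A i j * extend J c j = ∑ j ∈ J, A i j * extend J c j := by
        symm
        apply Finset.sum_subset (Finset.subset_univ J)
        intro j _ hjJ
        rw [extend_not_mem c hjJ, mul_zero]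
    _ = ∑ j : {j // j ∈ J}, A i ↑j * extend J c ↑j := (Finset.sum_coe_sort J _).symm
    _ = ∑ j : {j // j ∈ J}, A i ↑j * c j :=
        Finset.sum_congr rfl fun j _ => by rw [extend_mem c j.2]

lemma colsH_mulVec_apply (A : Matrix κ ι 𝕜) (J : Finset ι) (v : κ → 𝕜) (j : {j // j ∈ J}) :
    ((cols A J)ᴴ.mulVec v) j = (Aᴴ.mulVec v) ↑j := rfl

lemma dot_col (B A : Matrix κ ι 𝕜) (t : ι) (x : ι → 𝕜) :
    star (col B t) ⬝ᵥ (A.mulVec x) = ((Bᴴ * A).mulVec x) t := by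
  rw [← Matrix.mulVec_mulVec]
  rfl

lemma l2_proj_sq [DecidableEq ι] (T : Finset ι) (v : ι → 𝕜) :
    l2 (proj T v) ^ 2 = ∑ i ∈ T, ‖v i‖ ^ 2 := by
  rw [l2_sq]
  rw [← Finset.sum_subset (Finset.subset_univ T)
    (f := fun i => ‖proj T v i‖^2) (by intro i _ h; simp [proj, h])]
  refine Finset.sum_congr rfl fun i hi => by simp [proj, hi]

lemma l2_single [DecidableEq ι] (j : ι) : l2 ((Pi.single j (1:𝕜)) : ι → 𝕜) = 1 := by
  have h : (∑ i, ‖(Pi.single j (1:𝕜) : ι → 𝕜) i‖^2) = 1 := by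
    rw [Finset.sum_eq_single j]
    · simp
    · intro i _ hij; simp [Pi.single_eq_of_ne hij]
    · intro h; exact absurd (Finset.mem_univ j) h
  rw [l2, h, Real.sqrt_one]

lemma cols_mulVec_l2_le [DecidableEq ι] (A : Matrix κ ι 𝕜) {J S : Finset ι} (hJS : J ⊆ S)
    (d : {j // j ∈ J} → 𝕜) :
    l2 ((cols A J).mulVec d) ≤ specNorm (cols A S) * l2 d := by
  set d' : {j // j ∈ S} → 𝕜 := fun j => extend J d ↑j with hd'
  have h1 : extend S d' = extend J d := by
    funext i
    by_cases hiS : i ∈ S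
    · rw [extend_mem d' hiS]
    · rw [extend_not_mem d' hiS, extend_not_mem d (fun h => hiS (hJS h))]
  have h2 : (cols A J).mulVec d = (cols A S).mulVec d' := by
    rw [← mulVec_extend, ← mulVec_extend, h1]
  have h3 : l2 d' = l2 d := by
    rw [← l2_extend d', ← l2_extend d, h1]
  rw [h2, ← h3]
  exact mulVec_l2_le _ _

lemma colsH_l2_le [DecidableEq ι] [DecidableEq κ] (A : Matrix κ ι 𝕜) {J S : Finset ι}
    (hJS : J ⊆ S) (v : κ → 𝕜) :
    l2 ((cols A J)ᴴ.mulVec v) ≤ specNorm (cols A S) * l2 v := by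
  have hsq : l2 ((cols A J)ᴴ.mulVec v)^2 ≤ l2 ((cols A S)ᴴ.mulVec v)^2 := by
    rw [l2_sq, l2_sq]
    calc ∑ j : {j // j ∈ J}, ‖((cols A J)ᴴ.mulVec v) j‖^2
        = ∑ j ∈ J, ‖(Aᴴ.mulVec v) j‖^2 := by
          rw [← Finset.sum_coe_sort J (fun j => ‖(Aᴴ.mulVec v) j‖^2)]
          exact Finset.sum_congr rfl fun j _ => by rw [colsH_mulVec_apply]
      _ ≤ ∑ j ∈ S, ‖(Aᴴ.mulVec v) j‖^2 :=
          Finset.sum_le_sum_of_subset_of_nonneg hJS (fun j _ _ => by positivity)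
      _ = ∑ j : {j // j ∈ S}, ‖((cols A S)ᴴ.mulVec v) j‖^2 := by
          rw [← Finset.sum_coe_sort S (fun j => ‖(Aᴴ.mulVec v) j‖^2)]
          exact Finset.sum_congr rfl fun j _ => by rw [colsH_mulVec_apply]
  have h := le_of_pow_le_pow_left₀ (two_ne_zero) (l2_nonneg _) hsq
  exact h.trans (conjT_mulVec_l2_le (cols A S) v)

lemma col_eq_cols_mulVec [DecidableEq ι] (A : Matrix κ ι 𝕜) {S : Finset ι} {j : ι}
    (hj : j ∈ S) : col A j = (cols A S).mulVec (Pi.single ⟨j, hj⟩ (1:𝕜)) := by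
  funext i
  rw [Matrix.mulVec_single]
  simp [col, cols, Matrix.submatrix_apply]

lemma col_l2_le [DecidableEq ι] (A : Matrix κ ι 𝕜) {S : Finset ι} {j : ι} (hj : j ∈ S) :
    l2 (col A j) ≤ specNorm (cols A S) := by
  rw [col_eq_cols_mulVec A hj]
  have := mulVec_l2_le (cols A S) (Pi.single ⟨j, hj⟩ (1:𝕜))
  rwa [l2_single, mul_one] at this

end Aux

/-- a single step of Oblique Matching Pursuit selects an element of `J* \ J`. -/
theorem statement6 (m n s : ℕ) (Ψ Ψt : Matrix (Fin m) (Fin n) 𝕜)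
    (xstar : Fin n → 𝕜) (Jstar : Finset (Fin n))
    (hsupp : ∀ i, xstar i ≠ 0 ↔ i ∈ Jstar) (hcard : Jstar.card ≤ s)
    (z y : Fin m → 𝕜) (hy : y = Ψ.mulVec xstar + z)
    (J : Finset (Fin n)) (hJsub : J ⊆ Jstar) (hJne : J ≠ Jstar)
    (hθ : theta (s + 1) (Ψtᴴ * Ψ) < 1)
    (hgap : (⨆ i, ‖proj (Jstar \ J) xstar i‖)
          - 2 * theta (s + 1) (Ψtᴴ * Ψ) * l2 (proj (Jstar \ J) xstar)
        > specNorm (cols Ψ Jstar) * specNorm (cols Ψt Jstar)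
            / (1 - theta (s + 1) (Ψtᴴ * Ψ))
            * (2 * (⨆ j, l2 (col Ψt j)) * l2 z)) :
    ∀ k, k ∉ Jstar →
      ∃ j ∈ Jstar \ J,
        ‖star (col Ψt k) ⬝ᵥ (obliqueE Ψ Ψt J).mulVec y‖ <
          ‖star (col Ψt j) ⬝ᵥ (obliqueE Ψ Ψt J).mulVec y‖ := by
  classical
  intro k hk
  set M : Matrix (Fin n) (Fin n) 𝕜 := Ψtᴴ * Ψ with hM
  set θ : ℝ := theta (s+1) M with hθdef
  obtain ⟨hθ0, tspec⟩ := theta_mem (s+1) M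
  have hθ0' : 0 ≤ θ := hθ0
  obtain ⟨j₁, hj₁S, hj₁J⟩ := Finset.exists_of_ssubset (ssubset_of_subset_of_ne hJsub hJne)
  set u : Fin n → 𝕜 := proj (Jstar \ J) xstar with hu
  have hcard1 : Jstar.card ≤ s + 1 := le_trans hcard (Nat.le_succ s)
  have hJcard : J.card ≤ s + 1 := le_trans (Finset.card_le_card hJsub) hcard1
  have h1θ : (0:ℝ) < 1 - θ := by linarith
  set a : ℝ := specNorm (cols Ψ Jstar) with ha
  set b : ℝ := specNorm (cols Ψt Jstar) with hb
  set μ : ℝ := ⨆ j, l2 (col Ψt j) with hμ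
  have ha0 : 0 ≤ a := norm_nonneg _
  have hb0 : 0 ≤ b := norm_nonneg _
  have hμle : ∀ t, l2 (col Ψt t) ≤ μ := fun t =>
    le_ciSup (f := fun j => l2 (col Ψt j)) (Set.Finite.bddAbove (Set.finite_range _)) t
  have hμ0 : 0 ≤ μ := le_trans (l2_nonneg _) (hμle k)
  -- coherence : 1 - θ ≤ a * b
  have hab : 1 - θ ≤ a * b := by
    have hsingle : ∀ i : Fin n, (Pi.single j₁ (1:𝕜) : Fin n → 𝕜) i ≠ 0 → i ∈ ({j₁} : Finset (Fin n)) := by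
      intro i hi
      by_contra h
      have : i ≠ j₁ := by simpa using h
      rw [Pi.single_eq_of_ne this] at hi
      exact hi rfl
    have hcard' : ({j₁} : Finset (Fin n)).card ≤ s + 1 := by simp
    have hts := tspec {j₁} hcard' (Pi.single j₁ 1) (Pi.single j₁ 1) hsingle hsingle
    rw [l2_single] at hts
    have hstar : star (Pi.single j₁ (1:𝕜) : Fin n → 𝕜) = Pi.single j₁ 1 := by
      funext i
      by_cases h : i = j₁
      · subst h; simp
      · simp [Pi.single_eq_of_ne h]
    have hdot1 : star (Pi.single j₁ (1:𝕜) : Fin n → 𝕜) ⬝ᵥ M.mulVec (Pi.single j₁ 1) = M j₁ j₁ := by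
      rw [hstar, single_dotProduct, Matrix.mulVec_single]
      simp
    have hdot2 : star (Pi.single j₁ (1:𝕜) : Fin n → 𝕜) ⬝ᵥ (Pi.single j₁ (1:𝕜) : Fin n → 𝕜) = 1 := by
      rw [hstar, single_dotProduct]
      simp
    rw [hdot1, hdot2, mul_one, mul_one] at hts
    have h1 : (1:ℝ) - θ ≤ ‖M j₁ j₁‖ := by
      have := norm_sub_le (M j₁ j₁) (M j₁ j₁ - 1)
      simp only [sub_sub_cancel, norm_one] at this
      linarith
    have hMdot : M j₁ j₁ = star (col Ψt j₁) ⬝ᵥ col Ψ j₁ := by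
      rw [hM]
      simp [Matrix.mul_apply, col, dotProduct, Matrix.conjTranspose_apply]
    have h2 : ‖M j₁ j₁‖ ≤ b * a := by
      rw [hMdot]
      exact (abs_dot_le _ _).trans
        (mul_le_mul (col_l2_le Ψt hj₁S) (col_l2_le Ψ hj₁S) (l2_nonneg _) hb0)
    nlinarith
  set Cb : ℝ := a * b / (1 - θ) with hCb
  have hCb1 : 1 ≤ Cb := (one_le_div h1θ).mpr (by linarith)
  -- the Gram matrix G
  set G : Matrix {j // j ∈ J} {j // j ∈ J} 𝕜 := (cols Ψt J)ᴴ * cols Ψ J with hG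
  have hGentry : ∀ (c : {j // j ∈ J} → 𝕜) (j : {j // j ∈ J}),
      (G.mulVec c) j = (M.mulVec (extend J c)) ↑j := by
    intro c j
    rw [hG, ← Matrix.mulVec_mulVec, colsH_mulVec_apply, ← mulVec_extend, hM,
      ← Matrix.mulVec_mulVec]
  have hdet : G.det ≠ 0 := by
    intro h0
    obtain ⟨c, hc0, hGc⟩ := (Matrix.exists_mulVec_eq_zero_iff).mpr h0
    set w0 : Fin n → 𝕜 := extend J c with hw0def
    have hw0 : w0 ≠ 0 := by
      intro h
      apply hc0
      funext j
      have := congrFun h ↑j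
      rwa [hw0def, extend_mem c j.2, Pi.zero_apply] at this
    have hwsupp : ∀ i, w0 i ≠ 0 → i ∈ J := by
      intro i hi
      by_contra h
      exact hi (extend_not_mem c h)
    have hproj : proj J (M.mulVec w0 - w0) = -w0 := by
      funext i
      by_cases hiJ : i ∈ J
      · have hMw : (M.mulVec w0) i = 0 := by
          have h := hGentry c ⟨i, hiJ⟩
          rw [hGc] at h
          exact (h.symm.trans rfl).symm ▸ h.symm
        simp [proj, hiJ, hMw]
      · have : w0 i = 0 := extend_not_mem c hiJ
        simp [proj, hiJ, this]
    have hle : l2 (proj J (M.mulVec w0 - w0)) ≤ θ * l2 w0 :=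
      proj_err_le (s+1) M J J (subset_refl J) hJcard w0 hwsupp
    rw [hproj, l2_neg] at hle
    have hwpos : 0 < l2 w0 := by
      rcases lt_or_eq_of_le (l2_nonneg w0) with h | h
      · exact h
      · exact absurd (l2_eq_zero h.symm) hw0
    nlinarith
  have hGinvG : ∀ d : {j // j ∈ J} → 𝕜, G.mulVec (G⁻¹.mulVec d) = d := by
    intro d
    rw [Matrix.mulVec_mulVec, Matrix.mul_nonsing_inv G hdet.isUnit, Matrix.one_mulVec]
  have hGinvG' : ∀ d : {j // j ∈ J} → 𝕜, G⁻¹.mulVec (G.mulVec d) = d := by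
    intro d
    rw [Matrix.mulVec_mulVec, Matrix.nonsing_inv_mul G hdet.isUnit, Matrix.one_mulVec]
  -- construction of xt
  set cvec : {j // j ∈ J} → 𝕜 := G⁻¹.mulVec (fun j : {j // j ∈ J} => -(M.mulVec u) ↑j) with hcvec
  set w : Fin n → 𝕜 := extend J cvec with hwdef
  set xt : Fin n → 𝕜 := u + w with hxt
  have husupp : ∀ i, u i ≠ 0 → i ∈ Jstar \ J := by
    intro i hi
    by_contra h
    simp [hu, proj, h] at hi
  have huJ : ∀ i ∈ J, u i = 0 := by
    intro i hi
    have : i ∉ Jstar \ J := by simp [hi]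
    simp [hu, proj, this]
  have hwJ : ∀ i, i ∉ J → w i = 0 := fun i hi => extend_not_mem cvec hi
  have hxtsupp : ∀ i, xt i ≠ 0 → i ∈ Jstar := by
    intro i hi
    rw [hxt, Pi.add_apply] at hi
    by_cases hiJ : i ∈ J
    · exact hJsub hiJ
    · rw [hwJ i hiJ, add_zero] at hi
      exact (Finset.mem_sdiff.mp (husupp i hi)).1
  have hMxtJ : ∀ i, (hiJ : i ∈ J) → (M.mulVec xt) i = 0 := by
    intro i hiJ
    have h1 : (M.mulVec xt) i = (M.mulVec u) i + (M.mulVec w) i := by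
      rw [hxt, Matrix.mulVec_add, Pi.add_apply]
    have h2 : (M.mulVec w) i = (G.mulVec cvec) ⟨i, hiJ⟩ := (hGentry cvec ⟨i, hiJ⟩).symm
    have h3 : G.mulVec cvec = fun j : {j // j ∈ J} => -(M.mulVec u) ↑j := by
      rw [hcvec]
      exact hGinvG _
    rw [h1, h2, h3]
    simp
  have hprojJ : proj J (M.mulVec xt - xt) = -w := by
    funext i
    by_cases hiJ : i ∈ J
    · have hxti : xt i = w i := by rw [hxt, Pi.add_apply, huJ i hiJ, zero_add]
      simp [proj, hiJ, hMxtJ i hiJ, hxti]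
    · simp [proj, hiJ, hwJ i hiJ]
  have hwle : l2 w ≤ θ * l2 xt := by
    have := proj_err_le (s+1) M Jstar J hJsub hcard1 xt hxtsupp
    rwa [hprojJ, l2_neg] at this
  have hxtsq : l2 xt ^ 2 = l2 u ^ 2 + l2 w ^ 2 := by
    rw [l2_sq, l2_sq, l2_sq, ← Finset.sum_add_distrib]
    refine Finset.sum_congr rfl fun i _ => ?_
    by_cases hiJ : i ∈ J
    · rw [hxt, Pi.add_apply, huJ i hiJ, zero_add]
      simp
    · rw [hxt, Pi.add_apply, hwJ i hiJ, add_zero]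
      simp
  have hwsq : l2 w ^ 2 ≤ θ^2 * l2 xt ^ 2 := by
    nlinarith [l2_nonneg w, l2_nonneg xt, hwle, hθ0']
  -- signal error bound
  have signal : ∀ t, t ∉ J → ‖(M.mulVec xt - xt) t‖ ≤ θ * l2 u := by
    intro t htJ
    have hScard : (insert t Jstar).card ≤ s + 1 :=
      le_trans (Finset.card_insert_le t Jstar) (Nat.succ_le_succ hcard)
    have hT : insert t J ⊆ insert t Jstar := by
      intro i hi
      rcases Finset.mem_insert.mp hi with h | h
      · exact Finset.mem_insert.mpr (Or.inl h)
      · exact Finset.mem_insert.mpr (Or.inr (hJsub h))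
    have hxtS : ∀ i, xt i ≠ 0 → i ∈ insert t Jstar :=
      fun i hi => Finset.mem_insert.mpr (Or.inr (hxtsupp i hi))
    have hle : l2 (proj (insert t J) (M.mulVec xt - xt)) ≤ θ * l2 xt :=
      proj_err_le (s+1) M (insert t Jstar) (insert t J) hT hScard xt hxtS
    have hsplit : l2 (proj (insert t J) (M.mulVec xt - xt))^2
        = ‖(M.mulVec xt - xt) t‖^2 + l2 w ^2 := by
      rw [l2_proj_sq, Finset.sum_insert htJ]
      congr 1
      rw [← l2_proj_sq, hprojJ, l2_neg]
    have hle2 : l2 (proj (insert t J) (M.mulVec xt - xt))^2 ≤ θ^2 * l2 xt^2 := by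
      nlinarith [l2_nonneg (proj (insert t J) (M.mulVec xt - xt)), l2_nonneg xt, hle, hθ0']
    have h2 : ‖(M.mulVec xt - xt) t‖^2 ≤ θ^2 * l2 u^2 := by
      nlinarith [hle2, hsplit, hxtsq,
        mul_nonneg (mul_nonneg (by linarith : (0:ℝ) ≤ 1-θ) (by linarith : (0:ℝ) ≤ 1+θ))
          (sq_nonneg (l2 w))]
    refine le_of_pow_le_pow_left₀ two_ne_zero (mul_nonneg hθ0 (l2_nonneg u)) ?_
    calc ‖(M.mulVec xt - xt) t‖^2 ≤ θ^2 * l2 u^2 := h2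
      _ = (θ * l2 u)^2 := by ring
  -- the oblique projector P
  set P : Matrix (Fin m) (Fin m) 𝕜 := cols Ψ J * G⁻¹ * (cols Ψt J)ᴴ with hP
  have hEmul : ∀ v, (obliqueE Ψ Ψt J).mulVec v = v - P.mulVec v := by
    intro v
    rw [obliqueE, Matrix.sub_mulVec, Matrix.one_mulVec, hP, hG]
  have hGG : G * G⁻¹ = 1 := Matrix.mul_nonsing_inv G hdet.isUnit
  have hPP : P * P = P := by
    rw [hP]
    calc (cols Ψ J * G⁻¹ * (cols Ψt J)ᴴ) * (cols Ψ J * G⁻¹ * (cols Ψt J)ᴴ)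
        = cols Ψ J * ((G⁻¹ * (((cols Ψt J)ᴴ * cols Ψ J) * G⁻¹)) * (cols Ψt J)ᴴ) := by
          simp only [Matrix.mul_assoc]
      _ = cols Ψ J * G⁻¹ * (cols Ψt J)ᴴ := by
          rw [← hG, hGG, Matrix.mul_one]
          simp only [Matrix.mul_assoc]
  have hGinv_bound : ∀ e : {j // j ∈ J} → 𝕜, (1-θ) * l2 (G⁻¹.mulVec e) ≤ l2 e := by
    intro e
    set g : {j // j ∈ J} → 𝕜 := G⁻¹.mulVec e with hg
    have hGg : G.mulVec g = e := hGinvG e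
    set wg : Fin n → 𝕜 := extend J g with hwg
    have hwgsupp : ∀ i, wg i ≠ 0 → i ∈ J := by
      intro i hi
      by_contra h
      exact hi (extend_not_mem g h)
    have hproj2 : proj J (M.mulVec wg - wg) = extend J (fun j => e j - g j) := by
      funext i
      by_cases hiJ : i ∈ J
      · have h1 : (M.mulVec wg) i = e ⟨i, hiJ⟩ := by
          have := hGentry g ⟨i, hiJ⟩
          rw [hGg] at this
          exact this.symm
        have h2 : wg i = g ⟨i, hiJ⟩ := extend_mem g hiJ
        rw [extend_mem _ hiJ]
        simp [proj, hiJ, h1, h2]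
      · rw [extend_not_mem _ hiJ]
        simp [proj, hiJ]
    have hle : l2 (proj J (M.mulVec wg - wg)) ≤ θ * l2 wg :=
      proj_err_le (s+1) M J J (subset_refl J) hJcard wg hwgsupp
    rw [hproj2, l2_extend] at hle
    have hlwg : l2 wg = l2 g := l2_extend g
    rw [hlwg] at hle
    have htri : l2 g - l2 (fun j => e j - g j) ≤ l2 e := by
      have h := l2_sub_l2_le g (fun j => g j - e j)
      have h1 : g - (fun j => g j - e j) = e := by funext j; simp
      have h2 : l2 (fun j => g j - e j) = l2 (fun j => e j - g j) := by
        have : (fun j => g j - e j) = -(fun j => e j - g j) := by funext j; simp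
        rw [this, l2_neg]
      rw [h1, h2] at h
      exact h
    linarith
  have hPbound : ∀ v, l2 (P.mulVec v) ≤ Cb * l2 v := by
    intro v
    have hPv : P.mulVec v = (cols Ψ J).mulVec (G⁻¹.mulVec ((cols Ψt J)ᴴ.mulVec v)) := by
      rw [hP, ← Matrix.mulVec_mulVec, ← Matrix.mulVec_mulVec]
    have h1 : l2 ((cols Ψt J)ᴴ.mulVec v) ≤ b * l2 v := colsH_l2_le Ψt hJsub v
    have h2 : (1-θ) * l2 (G⁻¹.mulVec ((cols Ψt J)ᴴ.mulVec v)) ≤ l2 ((cols Ψt J)ᴴ.mulVec v) :=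
      hGinv_bound _
    have h3 : l2 ((cols Ψ J).mulVec (G⁻¹.mulVec ((cols Ψt J)ᴴ.mulVec v)))
        ≤ a * l2 (G⁻¹.mulVec ((cols Ψt J)ᴴ.mulVec v)) := cols_mulVec_l2_le Ψ hJsub _
    rw [hPv]
    have h4 : l2 (G⁻¹.mulVec ((cols Ψt J)ᴴ.mulVec v)) ≤ b * l2 v / (1-θ) := by
      rw [le_div_iff₀ h1θ]
      calc l2 (G⁻¹.mulVec ((cols Ψt J)ᴴ.mulVec v)) * (1-θ)
          = (1-θ) * l2 (G⁻¹.mulVec ((cols Ψt J)ᴴ.mulVec v)) := by ring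
        _ ≤ l2 ((cols Ψt J)ᴴ.mulVec v) := h2
        _ ≤ b * l2 v := h1
    calc l2 ((cols Ψ J).mulVec (G⁻¹.mulVec ((cols Ψt J)ᴴ.mulVec v)))
        ≤ a * l2 (G⁻¹.mulVec ((cols Ψt J)ᴴ.mulVec v)) := h3
      _ ≤ a * (b * l2 v / (1-θ)) := mul_le_mul_of_nonneg_left h4 ha0
      _ = Cb * l2 v := by rw [hCb]; ring
  have hEz : l2 ((obliqueE Ψ Ψt J).mulVec z) ≤ Cb * l2 z := by
    rw [hEmul z]
    exact oblique_l2_le P hPP hCb1 hPbound z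
  -- E (Ψ x*) = Ψ xt
  have hxd : xstar - xt = extend J (fun j => xstar ↑j - cvec j) := by
    funext i
    by_cases hiJ : i ∈ J
    · rw [extend_mem _ hiJ, Pi.sub_apply, hxt, Pi.add_apply, huJ i hiJ, zero_add, hwdef,
        extend_mem cvec hiJ]
    · rw [extend_not_mem _ hiJ, Pi.sub_apply, hxt, Pi.add_apply, hwJ i hiJ, add_zero]
      by_cases hiS : i ∈ Jstar
      · have : i ∈ Jstar \ J := Finset.mem_sdiff.mpr ⟨hiS, hiJ⟩
        rw [hu]
        simp [proj, this]
      · have hx0 : xstar i = 0 := by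
          by_contra h
          exact hiS ((hsupp i).mp h)
        have : i ∉ Jstar \ J := by simp [hiS]
        rw [hu]
        simp [proj, this, hx0]
  have hExstar : (obliqueE Ψ Ψt J).mulVec (Ψ.mulVec xstar) = Ψ.mulVec xt := by
    set d : {j // j ∈ J} → 𝕜 := fun j => xstar ↑j - cvec j with hd
    have hsplit : Ψ.mulVec xstar - Ψ.mulVec xt = (cols Ψ J).mulVec d := by
      rw [← Matrix.mulVec_sub, hxd, mulVec_extend]
    have hGd : G.mulVec d = (cols Ψt J)ᴴ.mulVec (Ψ.mulVec xstar) := by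
      funext j
      rw [hGentry d j, ← hxd, Matrix.mulVec_sub, Pi.sub_apply, hMxtJ ↑j j.2, sub_zero,
        colsH_mulVec_apply, Matrix.mulVec_mulVec, ← hM]
    have hPx : P.mulVec (Ψ.mulVec xstar) = (cols Ψ J).mulVec d := by
      rw [hP, ← Matrix.mulVec_mulVec, ← Matrix.mulVec_mulVec, ← hGd, hGinvG']
    rw [hEmul, hPx, ← hsplit]
    funext i
    simp
  have hEy : (obliqueE Ψ Ψt J).mulVec y = Ψ.mulVec xt + (obliqueE Ψ Ψt J).mulVec z := by
    rw [hy, Matrix.mulVec_add, hExstar]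
  -- noise bound
  have noise : ∀ t, ‖star (col Ψt t) ⬝ᵥ (obliqueE Ψ Ψt J).mulVec z‖ ≤ μ * (Cb * l2 z) :=
    fun t => (abs_dot_le _ _).trans (mul_le_mul (hμle t) hEz (l2_nonneg _) hμ0)
  -- inner product decomposition
  have hdot : ∀ t, star (col Ψt t) ⬝ᵥ (obliqueE Ψ Ψt J).mulVec y
      = xt t + (M.mulVec xt - xt) t + star (col Ψt t) ⬝ᵥ (obliqueE Ψ Ψt J).mulVec z := by
    intro t
    rw [hEy, dotProduct_add, dot_col Ψt Ψ t xt, ← hM, Pi.sub_apply]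
    ring
  -- argmax
  haveI hn : Nonempty (Fin n) := ⟨j₁⟩
  obtain ⟨i₀, hi₀⟩ := Finite.exists_max (fun i => ‖u i‖)
  have hsup_eq : (⨆ i, ‖u i‖) = ‖u i₀‖ :=
    le_antisymm (ciSup_le hi₀)
      (le_ciSup (f := fun i => ‖u i‖) (Set.Finite.bddAbove (Set.finite_range _)) i₀)
  have hgap' : ‖u i₀‖ - 2 * θ * l2 u > Cb * (2 * μ * l2 z) := by
    rw [← hsup_eq]
    exact hgap
  have hRHS0 : 0 ≤ Cb * (2 * μ * l2 z) :=
    mul_nonneg (le_trans zero_le_one hCb1)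
      (mul_nonneg (mul_nonneg (by norm_num) hμ0) (l2_nonneg z))
  have humax_pos : 0 < ‖u i₀‖ := by nlinarith [l2_nonneg u]
  have hi₀mem : i₀ ∈ Jstar \ J := husupp i₀ (by
    intro h
    rw [h] at humax_pos
    simp at humax_pos)
  have hi₀J : i₀ ∉ J := (Finset.mem_sdiff.mp hi₀mem).2
  refine ⟨i₀, hi₀mem, ?_⟩
  have hkJ : k ∉ J := fun h => hk (hJsub h)
  have hxtk : xt k = 0 := by
    have hu0 : u k = 0 := by
      have : k ∉ Jstar \ J := by simp [hk]
      rw [hu]; simp [proj, this]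
    rw [hxt, Pi.add_apply, hu0, hwJ k hkJ, add_zero]
  have hxti₀ : xt i₀ = u i₀ := by
    rw [hxt, Pi.add_apply, hwJ i₀ hi₀J, add_zero]
  have hDk : ‖star (col Ψt k) ⬝ᵥ (obliqueE Ψ Ψt J).mulVec y‖ ≤ θ * l2 u + μ * (Cb * l2 z) := by
    rw [hdot k, hxtk, zero_add]
    exact (norm_add_le _ _).trans (add_le_add (signal k hkJ) (noise k))
  have hDj : ‖u i₀‖ - θ * l2 u - μ * (Cb * l2 z)
      ≤ ‖star (col Ψt i₀) ⬝ᵥ (obliqueE Ψ Ψt J).mulVec y‖ := by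
    rw [hdot i₀, hxti₀]
    have htri : ‖u i₀‖ ≤ ‖u i₀ + (M.mulVec xt - xt) i₀ + star (col Ψt i₀) ⬝ᵥ (obliqueE Ψ Ψt J).mulVec z‖
        + ‖(M.mulVec xt - xt) i₀‖ + ‖star (col Ψt i₀) ⬝ᵥ (obliqueE Ψ Ψt J).mulVec z‖ := by
      have h1 : u i₀ = (u i₀ + (M.mulVec xt - xt) i₀ + star (col Ψt i₀) ⬝ᵥ (obliqueE Ψ Ψt J).mulVec z)
          - (M.mulVec xt - xt) i₀ - star (col Ψt i₀) ⬝ᵥ (obliqueE Ψ Ψt J).mulVec z := by ring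
      calc ‖u i₀‖ = ‖(u i₀ + (M.mulVec xt - xt) i₀ + star (col Ψt i₀) ⬝ᵥ (obliqueE Ψ Ψt J).mulVec z)
          - (M.mulVec xt - xt) i₀ - star (col Ψt i₀) ⬝ᵥ (obliqueE Ψ Ψt J).mulVec z‖ := by rw [← h1]
        _ ≤ _ := by
            refine (norm_sub_le _ _).trans ?_
            exact add_le_add_left (norm_sub_le _ _) _
    have h2 := signal i₀ hi₀J
    have h3 := noise i₀
    linarith
  linarith

end ObliquePursuit
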